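/- For n = 4, every distance-preserving bijection of the vertex set {−1,1}^4 of the 4-cube that fixes the three vertices (1,1,1,1), (−1,−1,1,1), and (−1,1,−1,1) is the identity map. -/

import Mathlib

/-- Squared-distance version of a distance equality in `EuclideanSpace ℝ (Fin 4)`. -/
lemma sumsq_of_dist_eq4 {x y z w : EuclideanSpace ℝ (Fin 4)} (h : dist x y = dist z w) :
    ∑ i, (x i - y i)^2 = ∑ i, (z i - w i)^2 := by
  rw [EuclideanSpace.dist_eq, EuclideanSpace.dist_eq] at h
  have h2 := congrArg (· ^ 2) h
  simpa [Real.dist_eq, sq_abs,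
    Real.sq_sqrt (Finset.sum_nonneg fun i _ => sq_nonneg _)] using h2

/-- Core finite case analysis: the distances to the three anchor vertices determine a
`±1`-vector up to one antipodal ambiguity. -/
lemma key3 (a0 a1 a2 a3 x0 x1 x2 x3 : ℝ)
    (ha0 : a0 = 1 ∨ a0 = -1) (ha1 : a1 = 1 ∨ a1 = -1)
    (ha2 : a2 = 1 ∨ a2 = -1) (ha3 : a3 = 1 ∨ a3 = -1)
    (hx0 : x0 = 1 ∨ x0 = -1) (hx1 : x1 = 1 ∨ x1 = -1)
    (hx2 : x2 = 1 ∨ x2 = -1) (hx3 : x3 = 1 ∨ x3 = -1)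
    (e1 : (a0-1)^2+((a1-1)^2+((a2-1)^2+(a3-1)^2)) = (x0-1)^2+((x1-1)^2+((x2-1)^2+(x3-1)^2)))
    (e2 : (a0+1)^2+((a1+1)^2+((a2-1)^2+(a3-1)^2)) = (x0+1)^2+((x1+1)^2+((x2-1)^2+(x3-1)^2)))
    (e3 : (a0+1)^2+((a1-1)^2+((a2+1)^2+(a3-1)^2)) = (x0+1)^2+((x1-1)^2+((x2+1)^2+(x3-1)^2))) :
    (a0=x0 ∧ a1=x1 ∧ a2=x2 ∧ a3=x3) ∨
    (a0=-x0 ∧ a1=-x1 ∧ a2=-x2 ∧ a3=-x3 ∧ x1=-x0 ∧ x2=-x0 ∧ x3=x0) := by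
  rcases ha0 with h|h <;> subst h <;> rcases ha1 with h|h <;> subst h <;>
  rcases ha2 with h|h <;> subst h <;> rcases ha3 with h|h <;> subst h <;>
  rcases hx0 with h|h <;> subst h <;> rcases hx1 with h|h <;> subst h <;>
  rcases hx2 with h|h <;> subst h <;> rcases hx3 with h|h <;> subst h <;>
  norm_num at *

/-- The vertex set of the standard `4`-cube `{−1,1}⁴`. -/
def cubeVertices4 : Set (EuclideanSpace ℝ (Fin 4)) :=
  {x | ∀ i, x i = 1 ∨ x i = -1}

/-- Every self-isometry of the vertex set of the `4`-cube fixing the vertices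
`(1,1,1,1)`, `(−1,−1,1,1)` and `(−1,1,−1,1)` is the identity. -/
theorem stmt11 (f : EuclideanSpace ℝ (Fin 4) → EuclideanSpace ℝ (Fin 4))
    (hbij : Set.BijOn f cubeVertices4 cubeVertices4)
    (hiso : ∀ x ∈ cubeVertices4, ∀ y ∈ cubeVertices4, dist (f x) (f y) = dist x y)
    (h1 : f (WithLp.toLp 2 (fun _ => 1) : EuclideanSpace ℝ (Fin 4)) = WithLp.toLp 2 (fun _ => 1))
    (h2 : f (WithLp.toLp 2 ![-1, -1, 1, 1] : EuclideanSpace ℝ (Fin 4)) = WithLp.toLp 2 ![-1, -1, 1, 1])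
    (h3 : f (WithLp.toLp 2 ![-1, 1, -1, 1] : EuclideanSpace ℝ (Fin 4)) = WithLp.toLp 2 ![-1, 1, -1, 1]) :
    ∀ x ∈ cubeVertices4, f x = x := by
  have hv0 : (WithLp.toLp 2 (fun _ => 1) : EuclideanSpace ℝ (Fin 4)) ∈ cubeVertices4 := fun _ => Or.inl rfl
  have hv1 : (WithLp.toLp 2 ![-1, -1, 1, 1] : EuclideanSpace ℝ (Fin 4)) ∈ cubeVertices4 := by
    intro i; fin_cases i <;> norm_num
  have hv2 : (WithLp.toLp 2 ![-1, 1, -1, 1] : EuclideanSpace ℝ (Fin 4)) ∈ cubeVertices4 := by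
    intro i; fin_cases i <;> norm_num
  have hw : (WithLp.toLp 2 ![1, -1, 1, 1] : EuclideanSpace ℝ (Fin 4)) ∈ cubeVertices4 := by
    intro i; fin_cases i <;> norm_num
  -- main step: the three anchors determine f x up to the antipodal ambiguity
  have step : ∀ x ∈ cubeVertices4,
      (f x 0 = x 0 ∧ f x 1 = x 1 ∧ f x 2 = x 2 ∧ f x 3 = x 3) ∨
      (f x 0 = -x 0 ∧ f x 1 = -x 1 ∧ f x 2 = -x 2 ∧ f x 3 = -x 3 ∧
        x 1 = -x 0 ∧ x 2 = -x 0 ∧ x 3 = x 0) := by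
    intro x hx
    have hax := hbij.mapsTo hx
    have d1 := sumsq_of_dist_eq4 (h1 ▸ hiso x hx _ hv0)
    have d2 := sumsq_of_dist_eq4 (h2 ▸ hiso x hx _ hv1)
    have d3 := sumsq_of_dist_eq4 (h3 ▸ hiso x hx _ hv2)
    simp only [Fin.sum_univ_four, PiLp.toLp_apply, Matrix.cons_val_zero, Matrix.cons_val_one,
      Matrix.head_cons, Matrix.cons_val_two, Matrix.tail_cons, Matrix.cons_val_three]
      at d1 d2 d3
    have d1' : (f x 0 - 1)^2+((f x 1 - 1)^2+((f x 2 - 1)^2+(f x 3 - 1)^2)) =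
        (x 0 - 1)^2+((x 1 - 1)^2+((x 2 - 1)^2+(x 3 - 1)^2)) := by
      linarith [d1]
    have d2' : (f x 0 + 1)^2+((f x 1 + 1)^2+((f x 2 - 1)^2+(f x 3 - 1)^2)) =
        (x 0 + 1)^2+((x 1 + 1)^2+((x 2 - 1)^2+(x 3 - 1)^2)) := by
      linarith [d2]
    have d3' : (f x 0 + 1)^2+((f x 1 - 1)^2+((f x 2 + 1)^2+(f x 3 - 1)^2)) =
        (x 0 + 1)^2+((x 1 - 1)^2+((x 2 + 1)^2+(x 3 - 1)^2)) := by
      linarith [d3]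
    exact key3 _ _ _ _ _ _ _ _ (hax 0) (hax 1) (hax 2) (hax 3)
      (hx 0) (hx 1) (hx 2) (hx 3) d1' d2' d3'
  -- the fourth anchor is fixed by f
  have hfw : f (WithLp.toLp 2 ![1, -1, 1, 1] : EuclideanSpace ℝ (Fin 4)) = WithLp.toLp 2 ![1, -1, 1, 1] := by
    rcases step _ hw with ⟨e0, e1, e2, e3⟩ | ⟨_, _, _, _, _, hc, _⟩
    · ext i; fin_cases i <;> simpa using (by assumption : _)
    · norm_num [Matrix.cons_val_two, Matrix.tail_cons, Matrix.head_cons] at hc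
  -- conclude
  intro x hx
  rcases step x hx with ⟨e0, e1, e2, e3⟩ | ⟨e0, e1, e2, e3, p1, p2, p3⟩
  · ext i; fin_cases i <;> simpa using (by assumption : _)
  · exfalso
    have d4 := sumsq_of_dist_eq4 (hfw ▸ hiso x hx _ hw)
    simp only [Fin.sum_univ_four, PiLp.toLp_apply, Matrix.cons_val_zero, Matrix.cons_val_one,
      Matrix.head_cons, Matrix.cons_val_two, Matrix.tail_cons, Matrix.cons_val_three]
      at d4
    rw [e0, e1, e2, e3, p1, p2, p3] at d4
    rcases hx 0 with h|h <;> rw [h] at d4 <;> norm_num at d4
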